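/- Fix β ≥ 0 and B ∈ ℝ. The function G_{β,B} is continuous on [0,1]^ℕ equipped with the product topology, and it attains its supremum: there exists s* ∈ [0,1]^ℕ with G_{β,B}(s*) = sup_{s ∈ [0,1]^ℕ} G_{β,B}(s). -/
import Mathlib


open Filter Topology

/-- `f_β(u) = (e^{-2β}(1-2u) + √(1 + (e^{-4β}-1)(1-2u)²)) / (2(1-u))`. -/
noncomputable def fBeta (β u : ℝ) : ℝ :=
  (Real.exp (-2*β) * (1-2*u) + Real.sqrt (1 + (Real.exp (-4*β) - 1) * (1-2*u)^2)) / (2*(1-u))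

/-- `F_β(t) = ∫_0^{min(t,1-t)} log f_β(u) du`. -/
noncomputable def FBeta (β t : ℝ) : ℝ :=
  ∫ u in (0:ℝ)..(min t (1-t)), Real.log (fBeta β u)

/-- The entropy function `I(t) = -t log t - (1-t) log(1-t)` (with `I(0) = I(1) = 0`,
using the convention `log 0 = 0`). -/
noncomputable def entI (t : ℝ) : ℝ := -t * Real.log t - (1-t) * Real.log (1-t)

/-- The mean `E[D] = ∑_{k≥1} k p_k` of a degree distribution `p`. -/
noncomputable def meanD (p : ℕ → ℝ) : ℝ := ∑' (k : ℕ), (k : ℝ) * p k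

/-- The functional
`G_{β,B}(s) = ∑_k p_k I(s_k) + B(2 ∑_k s_k p_k − 1) + E[D]·F_β((∑_k k p_k s_k)/E[D])`. -/
noncomputable def Gfun (p : ℕ → ℝ) (β B : ℝ) (s : ℕ → ℝ) : ℝ :=
  (∑' k, p k * entI (s k)) + B * (2 * (∑' k, s k * p k) - 1)
    + meanD p * FBeta β ((∑' (k : ℕ), (k : ℝ) * p k * s k) / meanD p)

/-- The cube `[0,1]^ℕ`. -/
def unitCube : Set (ℕ → ℝ) := {s | ∀ k, s k ∈ Set.Icc (0:ℝ) 1}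

/-- clamp to [0,1] -/
noncomputable def clamp01 (x : ℝ) : ℝ := max 0 (min x 1)

lemma clamp01_mem (x : ℝ) : clamp01 x ∈ Set.Icc (0:ℝ) 1 :=
  ⟨le_max_left _ _, max_le (by norm_num) (min_le_right _ _)⟩

lemma clamp01_eq {x : ℝ} (h : x ∈ Set.Icc (0:ℝ) 1) : clamp01 x = x := by
  simp [clamp01, min_eq_left h.2, max_eq_right h.1]

lemma continuous_clamp01 : Continuous clamp01 :=
  continuous_const.max (continuous_id.min continuous_const)

lemma continuous_entI : Continuous entI := by
  have h := Real.continuous_mul_log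
  have h2 : Continuous fun t : ℝ => (1 - t) * Real.log (1 - t) :=
    h.comp (continuous_const.sub continuous_id)
  have h1 : Continuous fun t : ℝ => -(t * Real.log t) := h.neg
  have : entI = fun t => -(t * Real.log t) - (1-t) * Real.log (1-t) := by
    ext t; unfold entI; ring
  rw [this]; exact h1.sub h2

lemma abs_mul_log_le_one {t : ℝ} (h : t ∈ Set.Icc (0:ℝ) 1) : |t * Real.log t| ≤ 1 := by
  rcases eq_or_lt_of_le h.1 with h0 | h0
  · simp [← h0]
  · rw [mul_comm]; exact (Real.abs_log_mul_self_lt t h0 h.2).le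

lemma abs_entI_le_two {t : ℝ} (h : t ∈ Set.Icc (0:ℝ) 1) : |entI t| ≤ 2 := by
  have h1 : (1 - t) ∈ Set.Icc (0:ℝ) 1 := ⟨by linarith [h.2], by linarith [h.1]⟩
  have := abs_mul_log_le_one h
  have := abs_mul_log_le_one h1
  have : |entI t| ≤ |t * Real.log t| + |(1-t) * Real.log (1-t)| := by
    have : entI t = -(t * Real.log t) - (1-t) * Real.log (1-t) := by unfold entI; ring
    rw [this]
    calc |-(t * Real.log t) - (1-t) * Real.log (1-t)|
        ≤ |-(t * Real.log t)| + |(1-t) * Real.log (1-t)| := abs_sub _ _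
      _ = |t * Real.log t| + |(1-t) * Real.log (1-t)| := by rw [abs_neg]
  linarith [abs_mul_log_le_one h, abs_mul_log_le_one h1]

lemma fBeta_pos_on {β : ℝ} (hβ : 0 ≤ β) {u : ℝ} (hu : u ∈ Set.Icc (0:ℝ) (1/2)) :
    0 < fBeta β u := by
  have h1 : 0 ≤ 1 - 2*u := by linarith [hu.2]
  have hin : 0 < 1 + (Real.exp (-4*β) - 1) * (1-2*u)^2 := by
    have he : Real.exp (-4*β) ≤ 1 := Real.exp_le_one_iff.mpr (by linarith)
    have he0 : 0 < Real.exp (-4*β) := Real.exp_pos _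
    have hsq : (1-2*u)^2 ≤ 1 := by nlinarith [hu.1, hu.2]
    nlinarith
  have hnum : 0 < Real.exp (-2*β) * (1-2*u) + Real.sqrt (1 + (Real.exp (-4*β) - 1) * (1-2*u)^2) := by
    have := Real.sqrt_pos.mpr hin
    have := (Real.exp_pos (-2*β)).le
    positivity
  have hden : 0 < 2*(1-u) := by linarith [hu.2]
  exact div_pos hnum hden

lemma continuousOn_log_fBeta {β : ℝ} (hβ : 0 ≤ β) :
    ContinuousOn (fun u => Real.log (fBeta β u)) (Set.Icc (0:ℝ) (1/2)) := by
  have hc : ContinuousOn (fBeta β) (Set.Icc (0:ℝ) (1/2)) := by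
    apply ContinuousOn.div
    · apply Continuous.continuousOn
      apply Continuous.add
      · exact continuous_const.mul (by continuity)
      · exact Real.continuous_sqrt.comp (by continuity)
    · exact (continuous_const.mul (continuous_const.sub continuous_id)).continuousOn
    · intro u hu; have h : (0:ℝ) < 2*(1-u) := by linarith [hu.2]
      exact h.ne'
  exact hc.log (fun u hu => (fBeta_pos_on hβ hu).ne')
/-- clamped endpoint map into `[0,1/2]`. -/
noncomputable def endpt (t : ℝ) : ℝ := max 0 (min (min t (1-t)) (1/2))

lemma continuous_endpt : Continuous endpt := by
  unfold endpt; fun_prop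

lemma endpt_mem (t : ℝ) : endpt t ∈ Set.Icc (0:ℝ) (1/2) :=
  ⟨le_max_left _ _, max_le (by norm_num) (min_le_right _ _)⟩

lemma endpt_eq {t : ℝ} (h : t ∈ Set.Icc (0:ℝ) 1) : endpt t = min t (1-t) := by
  have h1 : (0:ℝ) ≤ min t (1-t) := le_min h.1 (by linarith [h.2])
  have h2 : min t (1-t) ≤ 1/2 := by
    rcases le_total t (1/2) with hc | hc
    · exact le_trans (min_le_left _ _) hc
    · exact le_trans (min_le_right _ _) (by linarith)
  unfold endpt; rw [min_eq_left h2, max_eq_right h1]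

/-- Continuous version of FBeta (agreeing on [0,1]). -/
noncomputable def FBetaC (β t : ℝ) : ℝ := ∫ u in (0:ℝ)..(endpt t), Real.log (fBeta β u)

lemma continuous_FBetaC {β : ℝ} (hβ : 0 ≤ β) : Continuous (FBetaC β) := by
  have hint : MeasureTheory.IntegrableOn (fun u => Real.log (fBeta β u))
      (Set.uIcc (0:ℝ) (1/2)) MeasureTheory.volume := by
    rw [Set.uIcc_of_le (by norm_num : (0:ℝ) ≤ 1/2)]
    exact (continuousOn_log_fBeta hβ).integrableOn_Icc
  have hprim := intervalIntegral.continuousOn_primitive_interval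
    (a := (0:ℝ)) (b := 1/2) (μ := MeasureTheory.volume) hint
  exact hprim.comp_continuous continuous_endpt
    (fun t => by rw [Set.uIcc_of_le (by norm_num : (0:ℝ) ≤ 1/2)]; exact endpt_mem t)

lemma FBetaC_eq {β t : ℝ} (h : t ∈ Set.Icc (0:ℝ) 1) : FBetaC β t = FBeta β t := by
  unfold FBetaC FBeta; rw [endpt_eq h]

/-- `G_{β,B}` is continuous on `[0,1]^ℕ` (with the product topology) and attains
its supremum there. -/
theorem Gfun_continuousOn_and_attains_sup (p : ℕ → ℝ) (hp : ∀ k, 0 ≤ p k) (hp0 : p 0 = 0)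
    (hpsum : (∑' k, p k) = 1) (hmean : Summable fun k : ℕ => (k:ℝ) * p k)
    (β B : ℝ) (hβ : 0 ≤ β) :
    ContinuousOn (Gfun p β B) unitCube ∧
    ∃ s ∈ unitCube, Gfun p β B s = sSup (Gfun p β B '' unitCube) := by
  classical
  have hsump : Summable p := by
    by_contra hns
    rw [tsum_eq_zero_of_not_summable hns] at hpsum
    norm_num at hpsum
  -- the continuous extension
  set G' : (ℕ → ℝ) → ℝ := fun s =>
    (∑' k, p k * entI (clamp01 (s k))) + B * (2 * (∑' k, clamp01 (s k) * p k) - 1)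
      + meanD p * FBetaC β ((∑' (k : ℕ), (k : ℝ) * p k * clamp01 (s k)) / meanD p) with hG'
  have hclampk : ∀ k : ℕ, Continuous fun s : ℕ → ℝ => clamp01 (s k) :=
    fun k => continuous_clamp01.comp (continuous_apply k)
  have hT1 : Continuous fun s : ℕ → ℝ => ∑' k, p k * entI (clamp01 (s k)) := by
    apply continuous_tsum (u := fun k => 2 * p k)
    · exact fun k => continuous_const.mul (continuous_entI.comp (hclampk k))
    · exact hsump.mul_left 2
    · intro k s
      rw [Real.norm_eq_abs, abs_mul, abs_of_nonneg (hp k)]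
      calc p k * |entI (clamp01 (s k))| ≤ p k * 2 :=
            mul_le_mul_of_nonneg_left (abs_entI_le_two (clamp01_mem _)) (hp k)
        _ = 2 * p k := by ring
  have hT2 : Continuous fun s : ℕ → ℝ => ∑' k, clamp01 (s k) * p k := by
    apply continuous_tsum (u := fun k => p k)
    · exact fun k => (hclampk k).mul continuous_const
    · exact hsump
    · intro k s
      rw [Real.norm_eq_abs, abs_mul, abs_of_nonneg (hp k),
        abs_of_nonneg (clamp01_mem (s k)).1]
      exact mul_le_of_le_one_left (hp k) (clamp01_mem (s k)).2
  have hT3 : Continuous fun s : ℕ → ℝ => ∑' k : ℕ, (k:ℝ) * p k * clamp01 (s k) := by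
    apply continuous_tsum (u := fun k : ℕ => (k:ℝ) * p k)
    · exact fun k => continuous_const.mul (hclampk k)
    · exact hmean
    · intro k s
      have hkp : 0 ≤ (k:ℝ) * p k := mul_nonneg (Nat.cast_nonneg k) (hp k)
      rw [Real.norm_eq_abs, abs_mul, abs_of_nonneg hkp,
        abs_of_nonneg (clamp01_mem (s k)).1]
      exact mul_le_of_le_one_right hkp (clamp01_mem (s k)).2
  have hG'cont : Continuous G' := by
    apply Continuous.add
    · exact hT1.add (continuous_const.mul ((continuous_const.mul hT2).sub continuous_const))
    · exact continuous_const.mul ((continuous_FBetaC hβ).comp (hT3.div_const _))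
  -- meanD positive
  have hmeanpos : 0 < meanD p := by
    have hle : ∀ k : ℕ, p k ≤ (k:ℝ) * p k := by
      intro k
      rcases Nat.eq_zero_or_pos k with rfl | hk
      · simp [hp0]
      · have : (1:ℝ) ≤ (k:ℝ) := by exact_mod_cast hk
        nlinarith [hp k]
    have : (1:ℝ) ≤ meanD p := by
      rw [← hpsum]; exact Summable.tsum_le_tsum hle hsump hmean
    linarith
  -- equality on the cube
  have hEq : Set.EqOn (Gfun p β B) G' unitCube := by
    intro s hs
    have hc : ∀ k, clamp01 (s k) = s k := fun k => clamp01_eq (hs k)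
    have harg : (∑' (k : ℕ), (k:ℝ) * p k * s k) / meanD p ∈ Set.Icc (0:ℝ) 1 := by
      have hsummand : ∀ k : ℕ, 0 ≤ (k:ℝ) * p k * s k :=
        fun k => mul_nonneg (mul_nonneg (Nat.cast_nonneg k) (hp k)) (hs k).1
      have hub : ∀ k : ℕ, (k:ℝ) * p k * s k ≤ (k:ℝ) * p k := fun k =>
        mul_le_of_le_one_right (mul_nonneg (Nat.cast_nonneg k) (hp k)) (hs k).2
      have hsum3 : Summable fun k : ℕ => (k:ℝ) * p k * s k :=
        Summable.of_nonneg_of_le hsummand hub hmean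
      constructor
      · exact div_nonneg (tsum_nonneg hsummand) hmeanpos.le
      · rw [div_le_one hmeanpos]
        exact Summable.tsum_le_tsum hub hsum3 hmean
    unfold Gfun
    rw [hG']
    simp only [hc]
    rw [FBetaC_eq harg]
  have hcont : ContinuousOn (Gfun p β B) unitCube :=
    (hG'cont.continuousOn).congr hEq
  refine ⟨hcont, ?_⟩
  -- compactness
  have hcube : unitCube = Set.pi Set.univ (fun _ : ℕ => Set.Icc (0:ℝ) 1) := by
    ext s; simp [unitCube, Set.mem_pi, Set.mem_Icc, Pi.le_def, forall_and]
  have hcompact : IsCompact unitCube := by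
    rw [hcube]; exact isCompact_univ_pi (fun _ => isCompact_Icc)
  have hne : unitCube.Nonempty := ⟨fun _ => 0, fun k => by norm_num⟩
  obtain ⟨s, hs, hmax⟩ := hcompact.exists_sSup_image_eq hne hcont
  exact ⟨s, hs, hmax.symm⟩
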